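/- Let b = Ax + z with ‖z‖₂ ≤ ε, let λ > 0, and let x^♯ be a minimizer of u ↦ ‖u‖₁ + (1/(2λ))‖b − Au‖₂². Set h = x^♯ − x. Then for every subset E ⊂ {1,…,n}, ‖Ah‖₂² − 2ε‖Ah‖₂ ≤ 2λ(‖h_E‖₁ − ‖h_{E^c}‖₁ + 2‖x_{E^c}‖₁). -/
import Mathlib


noncomputable def l2norm {ι : Type*} [Fintype ι] (v : ι → ℝ) : ℝ :=
  Real.sqrt (∑ i, (v i) ^ 2)

noncomputable def l1norm {ι : Type*} [Fintype ι] (v : ι → ℝ) : ℝ :=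
  ∑ i, |v i|

noncomputable def linfnorm {ι : Type*} [Fintype ι] (v : ι → ℝ) : ℝ :=
  ⨆ i, |v i|

/-- The mutual coherence of a matrix: the largest absolute inner product
between two distinct columns. -/
noncomputable def mutualCoherence {m n : ℕ} (A : Matrix (Fin m) (Fin n) ℝ) : ℝ :=
  ⨆ p : {p : Fin n × Fin n // p.1 ≠ p.2}, |∑ r, A r p.1.1 * A r p.1.2|

/-- `restrict v E` agrees with `v` on `E` and vanishes outside of `E`. -/
def restrict {n : ℕ} (v : Fin n → ℝ) (E : Finset (Fin n)) : Fin n → ℝ :=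
  fun i => if i ∈ E then v i else 0

/-- A vector is `k`-sparse if it has at most `k` nonzero entries. -/
def sparse {n : ℕ} (k : ℕ) (v : Fin n → ℝ) : Prop :=
  (Finset.univ.filter fun i => v i ≠ 0).card ≤ k

lemma l2norm_sq {ι : Type*} [Fintype ι] (v : ι → ℝ) :
    l2norm v ^ 2 = ∑ i, (v i) ^ 2 := by
  rw [l2norm, Real.sq_sqrt]
  positivity

lemma l2norm_nonneg {ι : Type*} [Fintype ι] (v : ι → ℝ) : 0 ≤ l2norm v :=
  Real.sqrt_nonneg _

lemma l1norm_restrict {n : ℕ} (v : Fin n → ℝ) (E : Finset (Fin n)) :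
    l1norm (restrict v E) = ∑ i ∈ E, |v i| := by
  simp only [l1norm, restrict, apply_ite abs, abs_zero]
  rw [Finset.sum_ite_mem, Finset.univ_inter]

theorem stmt_1 {m n : ℕ} (A : Matrix (Fin m) (Fin n) ℝ)
    (x : Fin n → ℝ) (z : Fin m → ℝ) (b : Fin m → ℝ) (hb : b = A.mulVec x + z)
    (ε lam : ℝ) (hz : l2norm z ≤ ε) (hlam : 0 < lam)
    (xs : Fin n → ℝ)
    (hmin : ∀ u : Fin n → ℝ,
      l1norm xs + 1 / (2 * lam) * l2norm (b - A.mulVec xs) ^ 2 ≤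
        l1norm u + 1 / (2 * lam) * l2norm (b - A.mulVec u) ^ 2)
    (E : Finset (Fin n)) :
    l2norm (A.mulVec (xs - x)) ^ 2 - 2 * ε * l2norm (A.mulVec (xs - x)) ≤
      2 * lam * (l1norm (restrict (xs - x) E) - l1norm (restrict (xs - x) Eᶜ)
        + 2 * l1norm (restrict x Eᶜ)) := by
  set h : Fin n → ℝ := xs - x with hh
  set w : Fin m → ℝ := A.mulVec h with hw
  have hbx : b - A.mulVec x = z := by rw [hb]; abel
  have hbxs : b - A.mulVec xs = z - w := by
    have : A.mulVec xs = A.mulVec x + w := by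
      rw [hw, hh, ← Matrix.mulVec_add]
      funext i; simp
    rw [hb, this]; abel
  -- inner product bound
  set S : ℝ := ∑ i, z i * w i with hS
  have hcs : S ≤ ε * l2norm w := by
    have h1 : S ^ 2 ≤ (∑ i, z i ^ 2) * ∑ i, w i ^ 2 :=
      Finset.sum_mul_sq_le_sq_mul_sq _ _ _
    have h2 : S ≤ l2norm z * l2norm w := by
      calc S ≤ |S| := le_abs_self S
        _ = Real.sqrt (S ^ 2) := by rw [Real.sqrt_sq_eq_abs]
        _ ≤ Real.sqrt ((∑ i, z i ^ 2) * ∑ i, w i ^ 2) := Real.sqrt_le_sqrt h1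
        _ = l2norm z * l2norm w := by
            rw [l2norm, l2norm, ← Real.sqrt_mul (by positivity)]
    exact h2.trans (mul_le_mul_of_nonneg_right hz (l2norm_nonneg w))
  -- expand the minimality inequality
  have hexp : ∑ i, (z i - w i) ^ 2 = ∑ i, z i ^ 2 - 2 * S + ∑ i, w i ^ 2 := by
    rw [hS, Finset.mul_sum, ← Finset.sum_sub_distrib, ← Finset.sum_add_distrib]
    apply Finset.sum_congr rfl
    intro i _; ring
  have hmin' := hmin x
  rw [hbx, hbxs] at hmin'
  rw [l2norm_sq, l2norm_sq] at hmin'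
  simp only [Pi.sub_apply] at hmin'
  rw [hexp] at hmin'
  have hkey : ∑ i, w i ^ 2 - 2 * S ≤ 2 * lam * (l1norm x - l1norm xs) := by
    have h0 : (0:ℝ) < 2 * lam := by linarith
    have h1 : (1 / (2 * lam)) * (∑ i, w i ^ 2 - 2 * S) ≤ l1norm x - l1norm xs := by
      have h2 := hmin'
      ring_nf at h2 ⊢
      linarith
    calc ∑ i, w i ^ 2 - 2 * S
        = (2 * lam) * ((1 / (2 * lam)) * (∑ i, w i ^ 2 - 2 * S)) := by
          field_simp
      _ ≤ 2 * lam * (l1norm x - l1norm xs) := mul_le_mul_of_nonneg_left h1 h0.le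
  -- l1 part
  have hl1 : l1norm x - l1norm xs ≤
      l1norm (restrict h E) - l1norm (restrict h Eᶜ) + 2 * l1norm (restrict x Eᶜ) := by
    rw [l1norm_restrict, l1norm_restrict, l1norm_restrict]
    have hsplit : ∀ v : Fin n → ℝ, l1norm v = ∑ i ∈ E, |v i| + ∑ i ∈ Eᶜ, |v i| := by
      intro v; rw [l1norm, Finset.sum_add_sum_compl]
    rw [hsplit x, hsplit xs]
    have hE : ∑ i ∈ E, |x i| - ∑ i ∈ E, |xs i| ≤ ∑ i ∈ E, |h i| := by
      rw [← Finset.sum_sub_distrib]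
      apply Finset.sum_le_sum
      intro i _
      have : |x i| - |xs i| ≤ |x i - xs i| := abs_sub_abs_le_abs_sub _ _
      have h2 : |x i - xs i| = |h i| := by rw [hh]; simp [abs_sub_comm]
      linarith
    have hEc : ∑ i ∈ Eᶜ, |x i| - ∑ i ∈ Eᶜ, |xs i| ≤
        ∑ i ∈ Eᶜ, (2 * |x i| - |h i|) := by
      rw [← Finset.sum_sub_distrib]
      apply Finset.sum_le_sum
      intro i _
      have : |h i| ≤ |xs i| + |x i| := by
        have := abs_sub (xs i) (x i)
        simpa [hh] using this
      linarith
    rw [Finset.sum_sub_distrib] at hEc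
    have h2x : ∑ i ∈ Eᶜ, 2 * |x i| = 2 * ∑ i ∈ Eᶜ, |x i| := by
      rw [Finset.mul_sum]
    linarith [hE, hEc]
  -- combine
  have hfin : l2norm w ^ 2 - 2 * ε * l2norm w ≤ 2 * lam * (l1norm x - l1norm xs) := by
    rw [l2norm_sq]
    nlinarith [hcs, hkey]
  calc l2norm (A.mulVec (xs - x)) ^ 2 - 2 * ε * l2norm (A.mulVec (xs - x))
      = l2norm w ^ 2 - 2 * ε * l2norm w := by rw [hw, hh]
    _ ≤ 2 * lam * (l1norm x - l1norm xs) := hfin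
    _ ≤ _ := by
        have := mul_le_mul_of_nonneg_left hl1 (by linarith : (0:ℝ) ≤ 2 * lam)
        simpa [hh] using this
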